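/- Let n ≥ 1 and let F be an upset of a De Morgan lattice L. Then F is a complete prime n-filter on L if and only if there exists a homomorphism of De Morgan lattices h : L → (Fin n → Bool × Bool) such that (h x i).2 = true implies (h x i).1 = true for all x ∈ L and i : Fin n (i.e., h takes values in the subalgebra Pₙ of DMₙ), and F = {x : ∃ i, (h x i).1 = true}. -/

import Mathlib

/-- A De Morgan lattice: a distributive lattice with an antitone involution. -/
class DeMorgan (L : Type*) extends DistribLattice L where
  dneg : L → L
  dneg_dneg : ∀ x : L, dneg (dneg x) = x
  dneg_sup : ∀ x y : L, dneg (x ⊔ y) = dneg x ⊓ dneg y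

prefix:max "∼" => DeMorgan.dneg

section Defs

variable {α : Type*}

/-- An upward closed subset of a lattice. -/
def IsUpset [Lattice α] (F : Set α) : Prop :=
  ∀ ⦃x y : α⦄, x ∈ F → x ≤ y → y ∈ F

/-- A lattice filter: an upset closed under binary meets. -/
def IsLatFilter [Lattice α] (F : Set α) : Prop :=
  IsUpset F ∧ ∀ x y : α, x ∈ F → y ∈ F → x ⊓ y ∈ F

/-- An `n`-filter: an upset such that for every nonempty finite `Y`, if the meet of
every nonempty subset of `Y` of size at most `n` lies in `F`, then so does the meet of `Y`. -/
def IsNFilter [Lattice α] (n : ℕ) (F : Set α) : Prop :=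
  IsUpset F ∧ ∀ (Y : Finset α) (hY : Y.Nonempty),
    (∀ (X : Finset α) (hX : X.Nonempty), X ⊆ Y → X.card ≤ n → X.inf' hX id ∈ F) →
    Y.inf' hY id ∈ F

/-- A prime upset: `x ⊔ y ∈ F` implies `x ∈ F` or `y ∈ F`. -/
def IsPrimeUpset [Lattice α] (F : Set α) : Prop :=
  ∀ x y : α, x ⊔ y ∈ F → x ∈ F ∨ y ∈ F

/-- A downward closed subset of a lattice. -/
def IsDownset [Lattice α] (I : Set α) : Prop :=
  ∀ ⦃x y : α⦄, x ∈ I → y ≤ x → y ∈ I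

/-- A lattice ideal: a downset closed under binary joins. -/
def IsIdeal [Lattice α] (I : Set α) : Prop :=
  IsDownset I ∧ ∀ x y : α, x ∈ I → y ∈ I → x ⊔ y ∈ I

/-- An `n`-ideal: the order dual notion of an `n`-filter. -/
def IsNIdeal [Lattice α] (n : ℕ) (I : Set α) : Prop :=
  IsDownset I ∧ ∀ (Y : Finset α) (hY : Y.Nonempty),
    (∀ (X : Finset α) (hX : X.Nonempty), X ⊆ Y → X.card ≤ n → X.sup' hX id ∈ I) →
    Y.sup' hY id ∈ I

variable {L : Type*} [DeMorgan L]

/-- Almost complete upset: `x ∈ F` implies `x ⊓ (y ⊔ ∼y) ∈ F`. -/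
def AlmostComplete (F : Set L) : Prop := ∀ x ∈ F, ∀ y : L, x ⊓ (y ⊔ ∼y) ∈ F

/-- Complete upset: almost complete and nonempty. -/
def IsCompleteUpset (F : Set L) : Prop := AlmostComplete F ∧ F.Nonempty

/-- Almost consistent upset: `(x ⊓ ∼x) ⊔ y ∈ F` implies `y ∈ F`. -/
def AlmostConsistent (F : Set L) : Prop := ∀ x y : L, (x ⊓ ∼x) ⊔ y ∈ F → y ∈ F

/-- Consistent upset: almost consistent and not total. -/
def IsConsistentUpset (F : Set L) : Prop := AlmostConsistent F ∧ F ≠ Set.univ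

/-- Classical upset: complete and consistent. -/
def IsClassicalUpset (F : Set L) : Prop := IsCompleteUpset F ∧ IsConsistentUpset F

/-- Kalman upset. -/
def IsKalmanUpset (F : Set L) : Prop :=
  ∀ x y z u : L, ((x ⊓ ∼x) ⊓ z) ⊔ u ∈ F → ((y ⊔ ∼y) ⊓ z) ⊔ u ∈ F

/-- A homomorphism of De Morgan lattices. -/
def IsDMHom {L M : Type*} [DeMorgan L] [DeMorgan M] (h : L → M) : Prop :=
  (∀ x y : L, h (x ⊓ y) = h x ⊓ h y) ∧ (∀ x y : L, h (x ⊔ y) = h x ⊔ h y) ∧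
    ∀ x : L, h (∼x) = ∼(h x)

/-- The filter generated by all elements of the form `x ⊔ ∼x`. -/
def Fcomp (L : Type*) [DeMorgan L] : Set L :=
  {a | ∃ (s : Finset L) (hs : s.Nonempty), s.inf' hs (fun x => x ⊔ ∼x) ≤ a}

/-- The `n`-filter generated by a set. -/
def nFilterGen (n : ℕ) (U : Set L) : Set L :=
  ⋂₀ {F : Set L | IsNFilter n F ∧ U ⊆ F}

/-- `Comp U`. -/
def CompCl (U : Set L) : Set L := {x | ∃ a ∈ U, ∃ f ∈ Fcomp L, a ⊓ f ≤ x}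

/-- `Cons U`. -/
def ConsCl (U : Set L) : Set L := {x | ∃ f ∈ Fcomp L, ∼f ⊔ x ∈ U}

/-- A congruence of De Morgan lattices, as a binary relation. -/
def IsCongruence (θ : L → L → Prop) : Prop :=
  Equivalence θ ∧
  (∀ a b c d : L, θ a b → θ c d → θ (a ⊓ c) (b ⊓ d)) ∧
  (∀ a b c d : L, θ a b → θ c d → θ (a ⊔ c) (b ⊔ d)) ∧
  ∀ a b : L, θ a b → θ (∼a) (∼b)

end Defs

/-- The four-element De Morgan lattice `DM₁` on `Bool × Bool`. -/
instance : DeMorgan (Bool × Bool) :=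
  { (inferInstance : DistribLattice (Bool × Bool)) with
    dneg := fun p => (!p.2, !p.1)
    dneg_dneg := by decide
    dneg_sup := by decide }

/-- Powers of `DM₁`, with componentwise operations. -/
instance {ι : Type*} : DeMorgan (ι → Bool × Bool) :=
  { (inferInstance : DistribLattice (ι → Bool × Bool)) with
    dneg := fun f i => ∼(f i)
    dneg_dneg := fun f => funext fun i => DeMorgan.dneg_dneg (f i)
    dneg_sup := fun f g => funext fun i => DeMorgan.dneg_sup (f i) (g i) }

section Aux

variable {α : Type*} [DistribLattice α]

lemma aux_peel {F : Set α} (hup : IsUpset F) (hpr : IsPrimeUpset F)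
    {ι : Type*} {J : Finset ι} (hJ : J.Nonempty) (g : ι → α) :
    ∀ x ∈ F, x ≤ J.sup' hJ g → ∃ j ∈ J, x ⊓ g j ∈ F := by
  induction hJ using Finset.Nonempty.cons_induction with
  | singleton a =>
    intro x hx hle
    refine ⟨a, Finset.mem_singleton_self a, ?_⟩
    rwa [inf_eq_left.mpr (by simpa using hle)]
  | cons a s ha hs ih =>
    intro x hx hle
    rw [Finset.sup'_cons hs] at hle
    have hx2 : (x ⊓ g a) ⊔ (x ⊓ s.sup' hs g) ∈ F := by
      rwa [← inf_sup_left, inf_eq_left.mpr hle]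
    rcases hpr _ _ hx2 with h | h
    · exact ⟨a, Finset.mem_cons_self a s, h⟩
    · obtain ⟨j, hj, hjF⟩ := ih _ h inf_le_right
      exact ⟨j, Finset.mem_cons_of_mem hj,
        hup hjF (inf_le_inf_right _ inf_le_left)⟩

end Aux
lemma aux_min_card {α : Type*} [DistribLattice α] {F : Set α} {k : ℕ}
    (hup : IsUpset F) (hpr : IsPrimeUpset F)
    (hnf : ∀ (Y : Finset α) (hY : Y.Nonempty),
      (∀ (X : Finset α) (hX : X.Nonempty), X ⊆ Y → X.card ≤ k + 1 → X.inf' hX id ∈ F) →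
      Y.inf' hY id ∈ F)
    {L₀ : Set α} (hsubl : IsSublattice L₀)
    (m : Fin (k + 2) → α) (hminj : Function.Injective m)
    (hmF : ∀ i, m i ∈ F) (hmL : ∀ i, m i ∈ L₀)
    (hmin : ∀ i, ∀ z, z ∈ L₀ → z ∈ F → z ≤ m i → z = m i) : False := by
  classical
  have hne : ∀ i : Fin (k + 2), ((Finset.univ : Finset (Fin (k + 2))).erase i).Nonempty := by
    intro i
    rw [← Finset.card_pos, Finset.card_erase_of_mem (Finset.mem_univ i), Finset.card_univ,
      Fintype.card_fin]
    omega
  set y : Fin (k + 2) → α := fun i => ((Finset.univ : Finset (Fin (k+2))).erase i).sup' (hne i) m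
    with hy
  have hmy : ∀ i j : Fin (k + 2), j ≠ i → m j ≤ y i := by
    intro i j hij
    exact Finset.le_sup' m (Finset.mem_erase.mpr ⟨hij, Finset.mem_univ j⟩)
  have hyL : ∀ i, y i ∈ L₀ := fun i =>
    hsubl.supClosed.finsetSup'_mem (hne i) (fun j _ => hmL j)
  -- the big meet is in F
  have hYne : ((Finset.univ : Finset (Fin (k+2))).image y).Nonempty :=
    Finset.Nonempty.image Finset.univ_nonempty y
  have hx₀F : (Finset.univ : Finset (Fin (k+2))).inf' Finset.univ_nonempty y ∈ F := by
    have hmain := hnf (Finset.univ.image y) hYne ?_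
    · rwa [Finset.inf'_image] at hmain
    intro X hX hXsub hXcard
    set g : α → Fin (k + 2) := fun x => if h : ∃ i, y i = x then h.choose else 0 with hg
    have hgy : ∀ x ∈ X, y (g x) = x := by
      intro x hx
      obtain ⟨i, _, hi⟩ := Finset.mem_image.mp (hXsub hx)
      have hex : ∃ i, y i = x := ⟨i, hi⟩
      simp only [hg, dif_pos hex]
      exact hex.choose_spec
    obtain ⟨j, hj⟩ : ∃ j : Fin (k + 2), j ∉ X.image g := by
      by_contra hcon
      push_neg at hcon
      have huniv : (Finset.univ : Finset (Fin (k+2))) ⊆ X.image g :=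
        fun j _ => hcon j
      have := Finset.card_le_card huniv
      have h2 := Finset.card_image_le (s := X) (f := g)
      rw [Finset.card_univ, Fintype.card_fin] at this
      omega
    have hmj : ∀ x ∈ X, m j ≤ x := by
      intro x hx
      have hgx : g x ≠ j := fun h => hj (h ▸ Finset.mem_image_of_mem g hx)
      calc m j ≤ y (g x) := hmy (g x) j (fun h => hgx h.symm)
      _ = x := hgy x hx
    exact hup (hmF j) (Finset.le_inf' hX id hmj)
  set x₀ : α := (Finset.univ : Finset (Fin (k+2))).inf' Finset.univ_nonempty y with hx₀
  have hx₀le : ∀ i, x₀ ≤ y i := fun i => Finset.inf'_le y (Finset.mem_univ i)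
  have hx₀L : x₀ ∈ L₀ :=
    hsubl.infClosed.finsetInf'_mem Finset.univ_nonempty (fun j _ => hyL j)
  -- peel twice
  obtain ⟨j, hjmem, hj1⟩ := aux_peel hup hpr (hne 0) m x₀ hx₀F (hx₀le 0)
  have hj0 : j ≠ 0 := (Finset.mem_erase.mp hjmem).1
  obtain ⟨j', hj'mem, hj'1⟩ := aux_peel hup hpr (hne j) m (x₀ ⊓ m j) hj1
    (le_trans inf_le_left (hx₀le j))
  have hjj' : j' ≠ j := (Finset.mem_erase.mp hj'mem).1
  set x₂ : α := x₀ ⊓ m j ⊓ m j' with hx₂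
  have hx₂L : x₂ ∈ L₀ := hsubl.infClosed (hsubl.infClosed hx₀L (hmL j)) (hmL j')
  have e1 : x₂ = m j := hmin j x₂ hx₂L hj'1 (le_trans inf_le_left inf_le_right)
  have e2 : x₂ = m j' := hmin j' x₂ hx₂L hj'1 inf_le_right
  exact hjj' (hminj (e2 ▸ e1))
lemma aux_coloring {α : Type*} [DistribLattice α] {F : Set α} {n : ℕ} (hn : 1 ≤ n)
    (hup : IsUpset F) (hpr : IsPrimeUpset F) (hnf : IsNFilter n F)
    (S : Finset α) (hS : ↑S ⊆ F) :
    ∃ c : α → Fin n, ∀ (X : Finset α) (hX : X.Nonempty), ↑X ⊆ (↑S : Set α) →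
      (∀ x ∈ X, ∀ y ∈ X, c x = c y) → X.inf' hX id ∈ F := by
  classical
  obtain ⟨k, rfl⟩ : ∃ k, n = k + 1 := ⟨n - 1, by omega⟩
  set L₀ : Set α := latticeClosure (↑S : Set α) with hL₀
  have hL₀fin : L₀.Finite := S.finite_toSet.latticeClosure
  have hsubl : IsSublattice L₀ := isSublattice_latticeClosure
  set M : Set α := {m | (m ∈ L₀ ∧ m ∈ F) ∧ ∀ z, z ∈ L₀ → z ∈ F → z ≤ m → z = m} with hM
  have hMfin : M.Finite := hL₀fin.subset (fun x hx => hx.1.1)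
  have hbelow : ∀ x, x ∈ L₀ → x ∈ F → ∃ m ∈ M, m ≤ x := by
    intro x hxL hxF
    have hfin : {z | (z ∈ L₀ ∧ z ∈ F) ∧ z ≤ x}.Finite :=
      hL₀fin.subset (fun z hz => hz.1.1)
    obtain ⟨a, ha, hamin⟩ := hfin.exists_minimal ⟨x, ⟨hxL, hxF⟩, le_rfl⟩
    refine ⟨a, ⟨ha.1, fun z hzL hzF hza => ?_⟩, ha.2⟩
    exact le_antisymm hza (hamin ⟨⟨hzL, hzF⟩, hza.trans ha.2⟩ hza)
  -- card bound
  have hMcard : hMfin.toFinset.card ≤ k + 1 := by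
    by_contra hlt
    push_neg at hlt
    obtain ⟨t, htM, htcard⟩ := Finset.exists_subset_card_eq (s := hMfin.toFinset) (n := k + 2) (by omega)
    have e := t.equivFin
    rw [htcard] at e
    refine aux_min_card hup hpr hnf.2 hsubl (fun i => (e.symm i : α)) ?_ ?_ ?_ ?_
    · intro i j hij
      exact e.symm.injective (Subtype.ext hij)
    · intro i
      have := hMfin.mem_toFinset.mp (htM (e.symm i).2)
      exact this.1.2
    · intro i
      exact (hMfin.mem_toFinset.mp (htM (e.symm i).2)).1.1
    · intro i
      exact (hMfin.mem_toFinset.mp (htM (e.symm i).2)).2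
  -- choose minimal below each element of S
  have hchoice : ∀ x : α, ∃ mx : α, x ∈ S → mx ∈ M ∧ mx ≤ x := by
    intro x
    by_cases hx : x ∈ S
    · obtain ⟨m, hm, hmx⟩ := hbelow x (subset_latticeClosure hx) (hS hx)
      exact ⟨m, fun _ => ⟨hm, hmx⟩⟩
    · exact ⟨x, fun h => absurd h hx⟩
  choose μ hμ using hchoice
  set Mt := hMfin.toFinset with hMt
  refine ⟨fun x => if hx : μ x ∈ Mt then Fin.castLE hMcard (Mt.equivFin ⟨μ x, hx⟩)
    else ⟨0, hn⟩, ?_⟩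
  intro X hX hXS hmono
  obtain ⟨x₀, hx₀⟩ := id hX
  have hμM : ∀ x ∈ X, μ x ∈ Mt := fun x hx => hMfin.mem_toFinset.mpr (hμ x (hXS hx)).1
  have hsame : ∀ x ∈ X, μ x = μ x₀ := by
    intro x hx
    have h := hmono x hx x₀ hx₀
    simp only [dif_pos (hμM x hx), dif_pos (hμM x₀ hx₀)] at h
    have h2 := Fin.castLE_injective hMcard h
    have h3 := Mt.equivFin.injective h2
    exact congrArg Subtype.val h3
  have hμF : μ x₀ ∈ F := (hμ x₀ (hXS hx₀)).1.1.2
  refine hup hμF (Finset.le_inf' hX id ?_)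
  intro x hx
  rw [← hsame x hx]
  exact (hμ x (hXS hx)).2
lemma aux_global {α : Type*} [DistribLattice α] {F : Set α} {n : ℕ} (hn : 1 ≤ n)
    (hup : IsUpset F) (hpr : IsPrimeUpset F) (hnf : IsNFilter n F) :
    ∃ c : α → Fin n, ∀ (X : Finset α) (hX : X.Nonempty), ↑X ⊆ F →
      (∀ x ∈ X, ∀ y ∈ X, c x = c y) → X.inf' hX id ∈ F := by
  classical
  have hΦex : ∀ S : Finset α, ∃ c : α → Fin n,
      ∀ (X : Finset α) (hX : X.Nonempty), ↑X ⊆ (↑(S.filter (· ∈ F)) : Set α) →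
      (∀ x ∈ X, ∀ y ∈ X, c x = c y) → X.inf' hX id ∈ F := by
    intro S
    exact aux_coloring hn hup hpr hnf (S.filter (· ∈ F))
      (fun x hx => (Finset.mem_filter.mp hx).2)
  choose Φ hΦ using hΦex
  haveI : Nonempty (Finset α) := ⟨∅⟩
  haveI : (Filter.atTop : Filter (Finset α)).NeBot := Filter.atTop_neBot
  set U : Ultrafilter (Finset α) := Ultrafilter.of Filter.atTop with hUdef
  have hU : (U : Filter (Finset α)) ≤ Filter.atTop := Ultrafilter.of_le _
  have hex : ∀ x : α, ∃ v : Fin n, {S : Finset α | Φ S x = v} ∈ U := by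
    intro x
    by_contra hcon
    push_neg at hcon
    have hcompl : ∀ v : Fin n, {S : Finset α | Φ S x = v}ᶜ ∈ U := fun v =>
      (Ultrafilter.compl_mem_iff_notMem).mpr (hcon v)
    have h2 : (⋂ v : Fin n, {S : Finset α | Φ S x = v}ᶜ) ∈ U :=
      (Filter.iInter_mem).mpr hcompl
    obtain ⟨S, hS⟩ := Ultrafilter.nonempty_of_mem h2
    simp only [Set.mem_iInter, Set.mem_compl_iff, Set.mem_setOf_eq] at hS
    exact hS (Φ S x) rfl
  choose c hc using hex
  refine ⟨c, ?_⟩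
  intro X hX hXF hmono
  have hA : (⋂ x ∈ X, {S : Finset α | Φ S x = c x}) ∈ U :=
    (Filter.biInter_finset_mem X).mpr (fun x _ => hc x)
  have hB : Set.Ici X ∈ U := hU (Filter.Ici_mem_atTop X)
  obtain ⟨S, hSA, hSB⟩ := Ultrafilter.nonempty_of_mem (Filter.inter_mem hA hB)
  simp only [Set.mem_iInter, Set.mem_setOf_eq] at hSA
  have hXsub : ↑X ⊆ (↑(S.filter (· ∈ F)) : Set α) := by
    intro x hx
    simp only [Finset.coe_filter, Set.mem_setOf_eq]
    exact ⟨hSB hx, hXF hx⟩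
  refine hΦ S X hX hXsub ?_
  intro x hx y hy
  rw [hSA x hx, hSA y hy]
  exact hmono x hx y hy
lemma aux_sep {α : Type*} [DistribLattice α] {G I : Set α}
    (hGup : IsUpset G) (hGmeet : ∀ x y, x ∈ G → y ∈ G → x ⊓ y ∈ G)
    (hIdown : IsDownset I) (hIjoin : ∀ x y, x ∈ I → y ∈ I → x ⊔ y ∈ I)
    (hIne : I.Nonempty) (hdisj : ∀ x ∈ G, x ∉ I) :
    ∃ P : Set α, IsUpset P ∧ (∀ x y, x ∈ P → y ∈ P → x ⊓ y ∈ P) ∧ IsPrimeUpset P ∧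
      G ⊆ P ∧ ∀ x ∈ P, x ∉ I := by
  classical
  set S : Set (Set α) :=
    {J | IsDownset J ∧ (∀ x y, x ∈ J → y ∈ J → x ⊔ y ∈ J) ∧ I ⊆ J ∧ ∀ x ∈ G, x ∉ J} with hSdef
  have hIS : I ∈ S := ⟨hIdown, hIjoin, subset_rfl, hdisj⟩
  have hchain : ∀ c ⊆ S, IsChain (· ⊆ ·) c → c.Nonempty →
      ∃ ub ∈ S, ∀ s ∈ c, s ⊆ ub := by
    rintro c hcS hchain ⟨J₀, hJ₀⟩
    refine ⟨⋃₀ c, ⟨?_, ?_, ?_, ?_⟩, fun s hs => Set.subset_sUnion_of_mem hs⟩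
    · rintro x z ⟨J, hJ, hxJ⟩ hzx
      exact ⟨J, hJ, (hcS hJ).1 hxJ hzx⟩
    · rintro x z ⟨J1, hJ1, hx1⟩ ⟨J2, hJ2, hz2⟩
      rcases hchain.total hJ1 hJ2 with h | h
      · exact ⟨J2, hJ2, (hcS hJ2).2.1 _ _ (h hx1) hz2⟩
      · exact ⟨J1, hJ1, (hcS hJ1).2.1 _ _ hx1 (h hz2)⟩
    · exact ((hcS hJ₀).2.2.1).trans (Set.subset_sUnion_of_mem hJ₀)
    · rintro x hxG ⟨J, hJ, hxJ⟩
      exact (hcS hJ).2.2.2 x hxG hxJ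
  obtain ⟨J, hIJ, hJmax⟩ := zorn_subset_nonempty S hchain I hIS
  obtain ⟨hJdown, hJjoin, hIJ', hJG⟩ := hJmax.prop
  have hkey : ∀ z : α, z ∉ J → ∃ g ∈ G, ∃ jz ∈ J, g ≤ jz ⊔ z := by
    intro z hz
    set Jz : Set α := {x | ∃ j ∈ J, x ≤ j ⊔ z} with hJz
    have hJJz : J ⊆ Jz := fun j hj => ⟨j, hj, le_sup_left⟩
    have hzJz : z ∈ Jz := by
      obtain ⟨j0, hj0⟩ := hIne
      exact ⟨j0, hIJ' hj0, le_sup_right⟩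
    by_contra hng
    push_neg at hng
    have hJzS : Jz ∈ S := by
      refine ⟨?_, ?_, hIJ'.trans hJJz, ?_⟩
      · rintro x w ⟨j, hj, hxj⟩ hwx
        exact ⟨j, hj, hwx.trans hxj⟩
      · rintro x w ⟨j1, h1, hx1⟩ ⟨j2, h2, hw2⟩
        refine ⟨j1 ⊔ j2, hJjoin _ _ h1 h2, sup_le ?_ ?_⟩
        · exact hx1.trans (sup_le_sup_right le_sup_left z)
        · exact hw2.trans (sup_le_sup_right le_sup_right z)
      · rintro x hxG ⟨j, hj, hxj⟩
        exact hng x hxG j hj hxj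
    have hsub : J ⊆ Jz := hJJz
    have := hJmax.2 hJzS hsub
    exact hz (this hzJz)
  refine ⟨Jᶜ, ?_, ?_, ?_, ?_, ?_⟩
  · intro x w hx hxw
    exact fun hwJ => hx (hJdown hwJ hxw)
  · intro a b ha hb
    by_contra hab
    rw [Set.mem_compl_iff, not_not] at hab
    rw [Set.mem_compl_iff] at ha hb
    obtain ⟨g1, hg1, j1, hj1, hle1⟩ := hkey a ha
    obtain ⟨g2, hg2, j2, hj2, hle2⟩ := hkey b hb
    have hgG : g1 ⊓ g2 ∈ G := hGmeet _ _ hg1 hg2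
    have hle : g1 ⊓ g2 ≤ (j1 ⊔ j2) ⊔ (a ⊓ b) := by
      calc g1 ⊓ g2 ≤ (j1 ⊔ a) ⊓ (j2 ⊔ b) := inf_le_inf hle1 hle2
      _ = ((j1 ⊔ a) ⊓ j2) ⊔ ((j1 ⊔ a) ⊓ b) := inf_sup_left _ _ _
      _ ≤ (j1 ⊔ j2) ⊔ (a ⊓ b) := by
          refine sup_le ?_ ?_
          · exact inf_le_right.trans (le_sup_left.trans' le_sup_right)
          · rw [inf_sup_right]
            refine sup_le ?_ ?_
            · exact inf_le_left.trans (le_sup_left.trans' le_sup_left)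
            · exact le_sup_right
    have hmem : (j1 ⊔ j2) ⊔ (a ⊓ b) ∈ J := hJjoin _ _ (hJjoin _ _ hj1 hj2) hab
    exact hJG _ hgG (hJdown hmem hle)
  · intro x y hxy
    by_contra hcon
    push_neg at hcon
    simp only [Set.mem_compl_iff, not_not] at hcon
    rcases hcon with ⟨hx, hy⟩
    exact hxy (hJjoin _ _ hx hy)
  · exact fun g hg => hJG g hg
  · intro x hx hxI
    exact hx (hIJ' hxI)
lemma aux_primes {L : Type*} [DeMorgan L] {F : Set L} {n : ℕ} (hn : 1 ≤ n)
    (hF : IsUpset F) (hac : AlmostComplete F) (hne : F.Nonempty)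
    (hpr : IsPrimeUpset F) (hnf : IsNFilter n F) :
    ∃ P : Fin n → Set L,
      (∀ i, IsUpset (P i)) ∧ (∀ i x y, x ∈ P i → y ∈ P i → x ⊓ y ∈ P i) ∧
      (∀ i, IsPrimeUpset (P i)) ∧ (∀ (i : Fin n) (y : L), y ⊔ ∼y ∈ P i) ∧
      (∀ i, P i ⊆ F) ∧ (∀ x ∈ F, ∃ i, x ∈ P i) := by
  classical
  obtain ⟨c, hc⟩ := aux_global hn hF hpr hnf
  have hEF : ∀ y : L, y ⊔ ∼y ∈ F := by
    obtain ⟨a, ha⟩ := hne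
    intro y
    exact hF (hac a ha y) inf_le_right
  by_cases huniv : F = Set.univ
  · refine ⟨fun _ => Set.univ, fun i => fun x y _ _ => trivial,
      fun i x y _ _ => trivial, fun i x y _ => Or.inl trivial,
      fun i y => trivial, fun i => by rw [huniv], fun x _ => ⟨⟨0, hn⟩, trivial⟩⟩
  have key : ∀ i : Fin n, ∃ P : Set L, IsUpset P ∧
      (∀ x y, x ∈ P → y ∈ P → x ⊓ y ∈ P) ∧ IsPrimeUpset P ∧
      (∀ y : L, y ⊔ ∼y ∈ P) ∧ P ⊆ F ∧ ∀ x ∈ F, c x = i → x ∈ P := by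
    intro i
    set E : Set L := {z | ∃ y : L, z = y ⊔ ∼y} with hE
    set C : Set L := {x | (x ∈ F ∧ c x = i) ∨ x ∈ E} with hCdef
    have hCF : C ⊆ F := by
      rintro x (⟨h, _⟩ | ⟨y, rfl⟩)
      · exact h
      · exact hEF y
    have hmeetE : ∀ (W : Finset L) (hW : W.Nonempty), ↑W ⊆ E →
        ∀ x ∈ F, x ⊓ W.inf' hW id ∈ F := by
      intro W hW
      induction hW using Finset.Nonempty.cons_induction with
      | singleton a =>
        intro hWE x hx
        rw [Finset.inf'_singleton]
        obtain ⟨y, hy⟩ := hWE (Finset.mem_coe.mpr (Finset.mem_singleton_self a))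
        show x ⊓ a ∈ F
        rw [hy]
        exact hac x hx y
      | cons a s ha hs ih =>
        intro hWE x hx
        rw [Finset.inf'_cons hs]
        have hgoal : (x ⊓ a) ⊓ s.inf' hs id ∈ F := by
          refine ih (fun z hz => hWE (by simp [Finset.mem_coe.mp hz])) (x ⊓ a) ?_
          obtain ⟨y, hy⟩ := hWE (Finset.mem_coe.mpr (Finset.mem_cons_self a s))
          rw [hy]
          exact hac x hx y
        show x ⊓ (a ⊓ s.inf' hs id) ∈ F
        rwa [← inf_assoc]
    have hmeetC : ∀ (W : Finset L) (hW : W.Nonempty), ↑W ⊆ C → W.inf' hW id ∈ F := by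
      intro W hW hWC
      set W₁ := W.filter (fun x => x ∈ F ∧ c x = i) with hW₁
      set W₂ := W.filter (fun x => ¬(x ∈ F ∧ c x = i)) with hW₂
      have hW₂E : ↑W₂ ⊆ E := by
        intro x hx
        obtain ⟨hxW, hnx⟩ := Finset.mem_filter.mp (Finset.mem_coe.mp hx)
        rcases hWC (Finset.mem_coe.mpr hxW) with h | h
        · exact absurd h hnx
        · exact h
      rcases W₁.eq_empty_or_nonempty with h1 | h1
      · have hWE : ↑W ⊆ E := by
          intro x hx
          have hxW := Finset.mem_coe.mp hx
          by_cases hcase : x ∈ F ∧ c x = i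
          · exact absurd (hW₁ ▸ Finset.mem_filter.mpr ⟨hxW, hcase⟩ : x ∈ W₁)
              (by simp [h1])
          · exact hW₂E (Finset.mem_coe.mpr (Finset.mem_filter.mpr ⟨hxW, hcase⟩))
        obtain ⟨a, haF⟩ := hne
        exact hF (hmeetE W hW hWE a haF) inf_le_right
      rcases W₂.eq_empty_or_nonempty with h2 | h2
      · have hall : ∀ x ∈ W, x ∈ F ∧ c x = i := by
          intro x hx
          by_contra hcon
          have : x ∈ W₂ := Finset.mem_filter.mpr ⟨hx, hcon⟩
          simp [h2] at this
        exact hc W hW (fun x hx => (hall x (Finset.mem_coe.mp hx)).1)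
          (fun x hx y hy => ((hall x hx).2).trans ((hall y hy).2).symm)
      · have hunion : W₁ ∪ W₂ = W := Finset.filter_union_filter_not_eq _ W
        have hstep : ∀ (V : Finset L) (hV : V.Nonempty), V = W₁ ∪ W₂ →
            V.inf' hV id ∈ F := by
          rintro V hV rfl
          have heq := Finset.inf'_union h1 h2 id
          have hV' : (W₁ ∪ W₂).inf' hV id = W₁.inf' h1 id ⊓ W₂.inf' h2 id := heq
          rw [hV']
          have hin1 : W₁.inf' h1 id ∈ F :=
            hc W₁ h1 (fun x hx => (Finset.mem_filter.mp (Finset.mem_coe.mp hx)).2.1)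
              (fun x hx y hy => ((Finset.mem_filter.mp hx).2.2).trans
                ((Finset.mem_filter.mp hy).2.2).symm)
          rw [inf_comm]
          exact hF (hmeetE W₂ h2 hW₂E _ hin1) (by rw [inf_comm])
        exact hstep W hW hunion.symm
    set G : Set L := {z | ∃ W : Finset L, ∃ hW : W.Nonempty, ↑W ⊆ C ∧ W.inf' hW id ≤ z}
      with hGdef
    have hGup : IsUpset G := by
      rintro x y ⟨W, hW, hWC, hle⟩ hxy
      exact ⟨W, hW, hWC, hle.trans hxy⟩
    have hGmeet : ∀ x y, x ∈ G → y ∈ G → x ⊓ y ∈ G := by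
      rintro x y ⟨W1, h1, hC1, le1⟩ ⟨W2, h2, hC2, le2⟩
      refine ⟨W1 ∪ W2, h1.mono Finset.subset_union_left, ?_, ?_⟩
      · rw [Finset.coe_union]
        exact Set.union_subset hC1 hC2
      · have heq := Finset.inf'_union h1 h2 id
        have : (W1 ∪ W2).inf' (h1.mono Finset.subset_union_left) id =
            W1.inf' h1 id ⊓ W2.inf' h2 id := heq
        rw [this]
        exact inf_le_inf le1 le2
    have hGC : C ⊆ G := by
      intro x hx
      exact ⟨{x}, Finset.singleton_nonempty x, by simpa using hx, by simp⟩
    have hGF : G ⊆ F := by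
      rintro z ⟨W, hW, hWC, hle⟩
      exact hF (hmeetC W hW hWC) hle
    have hIdown : IsDownset Fᶜ := by
      intro x y hx hyx
      exact fun hyF => hx (hF hyF hyx)
    have hIjoin : ∀ x y, x ∈ Fᶜ → y ∈ Fᶜ → x ⊔ y ∈ Fᶜ := by
      intro x y hx hy hxy
      rcases hpr x y hxy with h | h
      · exact hx h
      · exact hy h
    obtain ⟨x0, hx0⟩ := Set.ne_univ_iff_exists_notMem F |>.mp huniv
    obtain ⟨P, hPup, hPmeet, hPprime, hPG, hPI⟩ :=
      aux_sep hGup hGmeet hIdown hIjoin ⟨x0, hx0⟩ (fun x hx => by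
        simp only [Set.mem_compl_iff, not_not]
        exact hGF hx)
    refine ⟨P, hPup, hPmeet, hPprime, ?_, ?_, ?_⟩
    · intro y
      exact hPG (hGC (Or.inr ⟨y, rfl⟩))
    · intro x hxP
      have := hPI x hxP
      simpa using this
    · intro x hxF hcx
      exact hPG (hGC (Or.inl ⟨hxF, hcx⟩))
  choose P h1 h2 h3 h4 h5 h6 using key
  exact ⟨P, h1, h2, h3, h4, h5, fun x hx => ⟨c x, h6 (c x) x hx rfl⟩⟩
lemma dneg_inf' {L : Type*} [DeMorgan L] (x y : L) : ∼(x ⊓ y) = ∼x ⊔ ∼y := by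
  have h := DeMorgan.dneg_sup (∼x) (∼y)
  rw [DeMorgan.dneg_dneg, DeMorgan.dneg_dneg] at h
  rw [← h, DeMorgan.dneg_dneg]

lemma bb_le_fst : ∀ p q : Bool × Bool, p ≤ q → p.1 = true → q.1 = true := by decide
lemma bb_inf_fst_true : ∀ p q : Bool × Bool, p.1 = true → q.1 = true → (p ⊓ q).1 = true := by
  decide
lemma bb_sup_fst_or : ∀ p q : Bool × Bool, (p ⊔ q).1 = true → p.1 = true ∨ q.1 = true := by
  decide
lemma bb_excl_fst : ∀ q : Bool × Bool, (q.2 = true → q.1 = true) → (q ⊔ ∼q).1 = true := by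
  decide
/-- complete prime `n`-filters are precisely the preimages of the designated
set of `DMₙ` under De Morgan homomorphisms landing in the subalgebra `Pₙ`. -/
theorem statement4 {L : Type*} [DeMorgan L] [Nonempty L] (n : ℕ) (hn : 1 ≤ n)
    (F : Set L) (hF : IsUpset F) :
    (IsCompleteUpset F ∧ IsPrimeUpset F ∧ IsNFilter n F) ↔
      ∃ h : L → (Fin n → Bool × Bool), IsDMHom h ∧
        (∀ (x : L) (i : Fin n), (h x i).2 = true → (h x i).1 = true) ∧
        F = {x : L | ∃ i : Fin n, (h x i).1 = true} := by
  classical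
  constructor
  · rintro ⟨⟨hac, hnem⟩, hpr, hnf⟩
    obtain ⟨P, hPup, hPmeet, hPpr, hPE, hPF, hPcov⟩ := aux_primes hn hF hac hnem hpr hnf
    have hPneg : ∀ (i : Fin n) (x : L), x ∈ P i ∨ ∼x ∈ P i := fun i x =>
      hPpr i x (∼x) (hPE i x)
    set h : L → Fin n → Bool × Bool :=
      fun x i => (if x ∈ P i then true else false, if ∼x ∈ P i then false else true) with hh
    have hmemInf : ∀ (i : Fin n) (x y : L), x ⊓ y ∈ P i ↔ x ∈ P i ∧ y ∈ P i := by
      intro i x y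
      exact ⟨fun hz => ⟨hPup i hz inf_le_left, hPup i hz inf_le_right⟩,
        fun ⟨h1, h2⟩ => hPmeet i _ _ h1 h2⟩
    have hmemSup : ∀ (i : Fin n) (x y : L), x ⊔ y ∈ P i ↔ x ∈ P i ∨ y ∈ P i := by
      intro i x y
      refine ⟨hPpr i x y, fun hz => ?_⟩
      rcases hz with h1 | h1
      · exact hPup i h1 le_sup_left
      · exact hPup i h1 le_sup_right
    refine ⟨h, ⟨?_, ?_, ?_⟩, ?_, ?_⟩
    · intro x y
      funext i
      refine Prod.ext ?_ ?_
      · show (if x ⊓ y ∈ P i then true else false) = ((h x ⊓ h y) i).1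
        rw [Pi.inf_apply, Prod.fst_inf]
        show _ = (if x ∈ P i then true else false) ⊓ (if y ∈ P i then true else false)
        by_cases hx : x ∈ P i <;> by_cases hy : y ∈ P i <;>
          simp [hmemInf, hx, hy] <;> decide
      · show (if ∼(x ⊓ y) ∈ P i then false else true) = ((h x ⊓ h y) i).2
        rw [Pi.inf_apply, Prod.snd_inf]
        show _ = (if ∼x ∈ P i then false else true) ⊓ (if ∼y ∈ P i then false else true)
        rw [dneg_inf']
        by_cases hx : ∼x ∈ P i <;> by_cases hy : ∼y ∈ P i <;>
          simp [hmemSup, hx, hy] <;> decide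
    · intro x y
      funext i
      refine Prod.ext ?_ ?_
      · show (if x ⊔ y ∈ P i then true else false) = ((h x ⊔ h y) i).1
        rw [Pi.sup_apply, Prod.fst_sup]
        show _ = (if x ∈ P i then true else false) ⊔ (if y ∈ P i then true else false)
        by_cases hx : x ∈ P i <;> by_cases hy : y ∈ P i <;>
          simp [hmemSup, hx, hy] <;> decide
      · show (if ∼(x ⊔ y) ∈ P i then false else true) = ((h x ⊔ h y) i).2
        rw [Pi.sup_apply, Prod.snd_sup]
        show _ = (if ∼x ∈ P i then false else true) ⊔ (if ∼y ∈ P i then false else true)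
        rw [DeMorgan.dneg_sup]
        by_cases hx : ∼x ∈ P i <;> by_cases hy : ∼y ∈ P i <;>
          simp [hmemInf, hx, hy] <;> decide
    · intro x
      funext i
      refine Prod.ext ?_ ?_
      · show (if ∼x ∈ P i then true else false) = (∼(h x i)).1
        show _ = !(if ∼x ∈ P i then false else true)
        by_cases hx : ∼x ∈ P i <;> simp [hx]
      · show (if ∼∼x ∈ P i then false else true) = (∼(h x i)).2
        show _ = !(if x ∈ P i then true else false)
        rw [DeMorgan.dneg_dneg]
        by_cases hx : x ∈ P i <;> simp [hx]
    · intro x i h2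
      have hx : ∼x ∉ P i := by
        intro hmem
        simp only [hh, if_pos hmem] at h2
        exact Bool.false_ne_true h2
      have hxP : x ∈ P i := (hPneg i x).resolve_right hx
      show (if x ∈ P i then true else false) = true
      rw [if_pos hxP]
    · ext z
      simp only [Set.mem_setOf_eq]
      constructor
      · intro hz
        obtain ⟨i, hi⟩ := hPcov z hz
        exact ⟨i, by show (if z ∈ P i then true else false) = true; rw [if_pos hi]⟩
      · rintro ⟨i, hi⟩
        have : z ∈ P i := by
          by_contra hcon
          simp only [hh, if_neg hcon] at hi
          exact Bool.false_ne_true hi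
        exact hPF i this
  · rintro ⟨h, ⟨hinf, hsup, hneg⟩, hPn, rfl⟩
    have hmono : ∀ x y : L, x ≤ y → h x ≤ h y := by
      intro x y hxy
      have heq : h x ⊓ h y = h x := by
        rw [← hinf, inf_eq_left.mpr hxy]
      exact inf_eq_left.mp heq
    have hupset : IsUpset {x : L | ∃ i : Fin n, (h x i).1 = true} := by
      rintro x y ⟨i, hi⟩ hxy
      exact ⟨i, bb_le_fst _ _ (hmono x y hxy i) hi⟩
    have hsupneg : ∀ (y : L) (i : Fin n), (h (y ⊔ ∼y) i).1 = true := by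
      intro y i
      have he : h (y ⊔ ∼y) i = h y i ⊔ ∼(h y i) := by
        rw [hsup, hneg]; rfl
      rw [he]
      exact bb_excl_fst (h y i) (hPn y i)
    refine ⟨⟨?_, ?_⟩, ?_, hupset, ?_⟩
    · rintro x ⟨i, hi⟩ y
      refine ⟨i, ?_⟩
      have he : h (x ⊓ (y ⊔ ∼y)) i = h x i ⊓ h (y ⊔ ∼y) i := by
        rw [hinf]; rfl
      rw [he]
      exact bb_inf_fst_true _ _ hi (hsupneg y i)
    · obtain ⟨a⟩ := (inferInstance : Nonempty L)
      exact ⟨a ⊔ ∼a, ⟨0, hn⟩, hsupneg a ⟨0, hn⟩⟩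
    · rintro x y ⟨i, hi⟩
      have he : h (x ⊔ y) i = h x i ⊔ h y i := by rw [hsup]; rfl
      rw [he] at hi
      rcases bb_sup_fst_or _ _ hi with h1 | h1
      · exact Or.inl ⟨i, h1⟩
      · exact Or.inr ⟨i, h1⟩
    · intro Y hY hsubs
      have hstep : ∃ i : Fin n, ∀ y ∈ Y, (h y i).1 = true := by
        by_contra hcon
        push_neg at hcon
        choose g hg1 hg2 using hcon
        haveI : Nonempty (Fin n) := ⟨⟨0, hn⟩⟩
        set X : Finset L := Finset.univ.image g with hX
        have hXne : X.Nonempty := Finset.Nonempty.image Finset.univ_nonempty g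
        have hXsub : X ⊆ Y := by
          intro x hx
          obtain ⟨i, _, rfl⟩ := Finset.mem_image.mp hx
          exact hg1 i
        have hXcard : X.card ≤ n := by
          calc X.card ≤ (Finset.univ : Finset (Fin n)).card := Finset.card_image_le
          _ = n := by rw [Finset.card_univ, Fintype.card_fin]
        obtain ⟨i₀, hi₀⟩ := hsubs X hXne hXsub hXcard
        have hle : X.inf' hXne id ≤ g i₀ :=
          Finset.inf'_le id (Finset.mem_image_of_mem g (Finset.mem_univ i₀))
        have := bb_le_fst _ _ (hmono _ _ hle i₀) hi₀
        exact hg2 i₀ this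
      obtain ⟨i, hi⟩ := hstep
      refine ⟨i, ?_⟩
      have hgen : ∀ (W : Finset L) (hW : W.Nonempty),
          (∀ y ∈ W, (h y i).1 = true) → (h (W.inf' hW id) i).1 = true := by
        intro W hW
        induction hW using Finset.Nonempty.cons_induction with
        | singleton a =>
          intro hall
          rw [Finset.inf'_singleton]
          exact hall a (Finset.mem_singleton_self a)
        | cons a s ha hs ih =>
          intro hall
          rw [Finset.inf'_cons hs]
          have he : h (id a ⊓ s.inf' hs id) i = h a i ⊓ h (s.inf' hs id) i := by
            rw [show id a = a from rfl, hinf]; rfl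
          rw [he]
          exact bb_inf_fst_true _ _ (hall a (Finset.mem_cons_self a s))
            (ih (fun y hy => hall y (Finset.mem_cons_of_mem hy)))
      exact hgen Y hY hi
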